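/- Let \(\sigma_1, \sigma_2 < 1\), \(\sigma_3 > 0\), and \(\frac{3}{2} < \sigma_1+\sigma_2+\sigma_3 \le 2\). For \(T \ge 2\), \(\sum_{\substack{m_1 > T,\; n_1, n_2 \le T,\; m_2 \ge 1 \\ m_1+n_1 = m_2+n_2}} \frac{1}{m_1^{\sigma_1} m_2^{\sigma_1} n_1^{\sigma_2} n_2^{\sigma_2} (m_1+n_1)^{2\sigma_3}} \ll T^{3 - 2\sigma_1 - 2\sigma_2 - 2\sigma_3}\), with implicit constant depending only on the \(\sigma_j\). -/

import Mathlib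

open Finset

lemma aux_bern1 {q x : ℝ} (hq0 : 0 < q) (hq1 : q ≤ 1) (hx : 1 ≤ x) :
    q * x ^ (q - 1) ≤ x ^ q - (x - 1) ^ q := by
  have hx0 : (0:ℝ) < x := lt_of_lt_of_le one_pos hx
  have hinv : 1/x ≤ 1 := by rw [div_le_one hx0]; exact hx
  have h1 : (0:ℝ) ≤ 1 - 1/x := by linarith
  have hb : (1 - 1/x) ^ q ≤ 1 - q * (1/x) := by
    have h := rpow_one_add_le_one_add_mul_self (s := -(1/x)) (by linarith) hq0.le hq1
    have e1 : 1 + -(1/x) = 1 - 1/x := by ring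
    have e2 : 1 + q * -(1/x) = 1 - q * (1/x) := by ring
    rwa [e1, e2] at h
  have hsplit : (x - 1) ^ q = x ^ q * (1 - 1/x) ^ q := by
    rw [← Real.mul_rpow hx0.le h1]
    congr 1; field_simp
  have hpow : x ^ q * (1/x) = x ^ (q-1) := by
    rw [Real.rpow_sub hx0, Real.rpow_one]; ring
  have h2 : (x-1)^q ≤ x^q - q * x^(q-1) := by
    calc (x-1)^q = x^q * (1-1/x)^q := hsplit
      _ ≤ x^q * (1 - q*(1/x)) :=
        mul_le_mul_of_nonneg_left hb (Real.rpow_nonneg hx0.le q)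
      _ = x^q - q * (x^q * (1/x)) := by ring
      _ = x^q - q * x^(q-1) := by rw [hpow]
  linarith

lemma aux_bern2 {p x : ℝ} (hp : 0 < p) (hx : 2 ≤ x) :
    p * x ^ (-(p+1)) ≤ (x - 1) ^ (-p) - x ^ (-p) := by
  have hx0 : (0:ℝ) < x := by linarith
  have hx1 : (0:ℝ) < x - 1 := by linarith
  have hinv : 1/x ≤ 1/2 := by
    rw [div_le_div_iff₀ hx0 (by norm_num)]; linarith
  have hinv0 : 0 < 1/x := by positivity
  have h1 : (0:ℝ) < 1 - 1/x := by linarith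
  have key : 1 + p * (1/x) ≤ (1 - 1/x) ^ (-p) := by
    rcases le_or_gt p 1 with hp1 | hp1
    · have hb : (1 - 1/x)^p ≤ 1 - p * (1/x) := by
        have h := rpow_one_add_le_one_add_mul_self (s := -(1/x)) (by linarith) hp.le hp1
        have e1 : 1 + -(1/x) = 1 - 1/x := by ring
        have e2 : 1 + p * -(1/x) = 1 - p * (1/x) := by ring
        rwa [e1, e2] at h
      have hbpos : (0:ℝ) < (1 - 1/x)^p := Real.rpow_pos_of_pos h1 p
      rw [Real.rpow_neg h1.le, ← one_div, le_div_iff₀ hbpos]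
      calc (1 + p * (1/x)) * (1 - 1/x)^p ≤ (1 + p * (1/x)) * (1 - p * (1/x)) := by
            apply mul_le_mul_of_nonneg_left hb (by positivity)
        _ = 1 - (p * (1/x))^2 := by ring
        _ ≤ 1 := by nlinarith [sq_nonneg (p * (1/x))]
    · have e3 : (1 - 1/x)⁻¹ = 1 + 1/(x-1) := by
        rw [inv_eq_one_div]
        field_simp
        ring
      have h := one_add_mul_self_le_rpow_one_add (s := 1/(x-1))
        (by linarith [div_pos one_pos hx1] : (-1:ℝ) ≤ 1/(x-1)) hp1.le
      have e4 : (1 - 1/x) ^ (-p) = (1 + 1/(x-1)) ^ p := by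
        rw [Real.rpow_neg h1.le, ← Real.inv_rpow h1.le, e3]
      rw [e4]
      refine le_trans ?_ h
      have : p * (1/x) ≤ p * (1/(x-1)) :=
        mul_le_mul_of_nonneg_left (one_div_le_one_div_of_le hx1 (by linarith)) hp.le
      linarith
  have hsplit : (x - 1) ^ (-p) = x ^ (-p) * (1 - 1/x) ^ (-p) := by
    rw [← Real.mul_rpow hx0.le h1.le]
    congr 1; field_simp
  have hpow : x ^ (-p) * (1/x) = x ^ (-(p+1)) := by
    have : -(p+1) = -p - 1 := by ring
    rw [this, Real.rpow_sub hx0, Real.rpow_one]; ring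
  have h2 : x ^ (-p) + p * x ^ (-(p+1)) ≤ (x-1) ^ (-p) := by
    calc x ^ (-p) + p * x ^ (-(p+1)) = x^(-p) * (1 + p * (1/x)) := by
          rw [← hpow]; ring
      _ ≤ x^(-p) * (1 - 1/x)^(-p) :=
          mul_le_mul_of_nonneg_left key (Real.rpow_nonneg hx0.le _)
      _ = (x-1)^(-p) := hsplit.symm
  linarith


lemma head_sum_le (σ : ℝ) (hσ : σ < 1) : ∃ C > 0, ∀ T : ℝ, 1 ≤ T →
    ∑ n ∈ Finset.Icc 1 ⌊T⌋₊, ((n:ℝ) ^ σ)⁻¹ ≤ C * T ^ (1 - σ) := by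
  have hq : 0 < 1 - σ := by linarith
  refine ⟨1/(1-σ) + 1, by positivity, fun T hT => ?_⟩
  have hT0 : (0:ℝ) < T := by linarith
  set X := ⌊T⌋₊ with hXdef
  have hXT : (X:ℝ) ≤ T := Nat.floor_le hT0.le
  have hTpow : (0:ℝ) ≤ T ^ (1-σ) := Real.rpow_nonneg hT0.le _
  have hC1 : (1:ℝ) ≤ 1/(1-σ) + 1 := by
    have : (0:ℝ) ≤ 1/(1-σ) := by positivity
    linarith
  rcases le_or_gt σ 0 with h0 | h0
  · have hb : ∀ n ∈ Finset.Icc 1 X, ((n:ℝ)^σ)⁻¹ ≤ T ^ (-σ) := by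
      intro n hn
      simp only [Finset.mem_Icc] at hn
      have hn1 : (1:ℝ) ≤ (n:ℝ) := by exact_mod_cast hn.1
      have hnT : (n:ℝ) ≤ T := le_trans (by exact_mod_cast hn.2) hXT
      rw [← Real.rpow_neg (by positivity)]
      exact Real.rpow_le_rpow (by positivity) hnT (by linarith)
    calc ∑ n ∈ Finset.Icc 1 X, ((n:ℝ)^σ)⁻¹ ≤ (Finset.Icc 1 X).card • (T ^ (-σ)) :=
          sum_le_card_nsmul _ _ _ hb
      _ = (X:ℝ) * T ^ (-σ) := by
          rw [Nat.card_Icc, nsmul_eq_mul]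
          norm_num
      _ ≤ T * T ^ (-σ) := by
          apply mul_le_mul_of_nonneg_right hXT (Real.rpow_nonneg hT0.le _)
      _ = T ^ (1-σ) := by
          rw [show (1:ℝ)-σ = 1 + -σ by ring, Real.rpow_add hT0, Real.rpow_one]
      _ ≤ (1/(1-σ) + 1) * T ^ (1-σ) := le_mul_of_one_le_left hTpow hC1
  · set q := 1 - σ with hqdef
    have hq1 : q ≤ 1 := by simp [hqdef]; linarith
    set f : ℕ → ℝ := fun k => (k:ℝ)^q with hf
    have key : ∀ n ∈ Finset.Icc 1 X, ((n:ℝ)^σ)⁻¹ ≤ (1/q) * (f n - f (n-1)) := by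
      intro n hn
      simp only [Finset.mem_Icc] at hn
      have hn1 : (1:ℝ) ≤ (n:ℝ) := by exact_mod_cast hn.1
      have haux := aux_bern1 (q := q) (x := (n:ℝ)) hq hq1 hn1
      have hcast : ((n-1 : ℕ):ℝ) = (n:ℝ) - 1 := by
        rw [Nat.cast_sub hn.1]; norm_num
      have hexp : ((n:ℝ)^σ)⁻¹ = (n:ℝ) ^ (q - 1) := by
        rw [← Real.rpow_neg (by positivity)]
        congr 1; rw [hqdef]; ring
      rw [hexp, hf]
      simp only [hcast]
      have e : (n:ℝ)^(q-1) = (1/q) * (q * (n:ℝ)^(q-1)) := by field_simp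
      rw [e]
      exact mul_le_mul_of_nonneg_left haux (by positivity)
    have tele : ∑ n ∈ Finset.Icc 1 X, (f n - f (n-1)) = f X - f 0 := by
      rw [← Finset.Ico_add_one_right_eq_Icc, Finset.sum_Ico_eq_sum_range]
      have : ∀ j, f (1 + j) - f (1 + j - 1) = f (j+1) - f j := by
        intro j; congr 2 <;> omega
      rw [Finset.sum_congr rfl (fun j _ => this j)]
      simp only [Nat.add_sub_cancel]
      rw [Finset.sum_range_sub f X]
    have hf0 : f 0 = 0 := by
      simp [hf]
      exact Real.zero_rpow (by linarith)
    calc ∑ n ∈ Finset.Icc 1 X, ((n:ℝ)^σ)⁻¹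
        ≤ ∑ n ∈ Finset.Icc 1 X, (1/q) * (f n - f (n-1)) := Finset.sum_le_sum key
      _ = (1/q) * (f X - f 0) := by rw [← Finset.mul_sum, tele]
      _ = (1/q) * (X:ℝ)^q := by rw [hf0, sub_zero]
      _ ≤ (1/q) * T^q := by
          apply mul_le_mul_of_nonneg_left _ (by positivity)
          exact Real.rpow_le_rpow (by positivity) hXT hq.le
      _ ≤ (1/(1-σ) + 1) * T ^ (1-σ) := by
          apply mul_le_mul_of_nonneg_right _ hTpow
          rw [hqdef]; linarith

lemma tail_sum_le (a : ℝ) (ha : 1 < a) : ∃ C > 0, ∀ T : ℝ, 2 ≤ T → ∀ M : ℕ,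
    ∑ n ∈ Finset.Ioc ⌊T⌋₊ M, ((n:ℝ) ^ a)⁻¹ ≤ C * T ^ (1 - a) := by
  have hp : 0 < a - 1 := by linarith
  refine ⟨(2:ℝ)^(a-1) / (a-1), by positivity, fun T hT M => ?_⟩
  have hT0 : (0:ℝ) < T := by linarith
  set p := a - 1 with hpdef
  set X := ⌊T⌋₊ with hXdef
  have hX2 : 2 ≤ X := Nat.le_floor (by exact_mod_cast hT)
  set g : ℕ → ℝ := fun k => (k:ℝ)^(-p) with hg
  have key : ∀ n ∈ Finset.Ioc X M, ((n:ℝ)^a)⁻¹ ≤ (1/p) * (g (n-1) - g n) := by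
    intro n hn
    simp only [Finset.mem_Ioc] at hn
    have hn2 : (2:ℝ) ≤ (n:ℝ) := by
      have : 2 ≤ n := le_trans hX2 (le_of_lt hn.1)
      exact_mod_cast this
    have haux := aux_bern2 (p := p) (x := (n:ℝ)) hp hn2
    have hcast : ((n-1 : ℕ):ℝ) = (n:ℝ) - 1 := by
      rw [Nat.cast_sub (by omega)]; norm_num
    have hexp : ((n:ℝ)^a)⁻¹ = (n:ℝ) ^ (-(p+1)) := by
      rw [← Real.rpow_neg (by positivity)]
      congr 1; rw [hpdef]; ring
    rw [hexp, hg]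
    simp only [hcast]
    have e : (n:ℝ)^(-(p+1)) = (1/p) * (p * (n:ℝ)^(-(p+1))) := by field_simp
    rw [e]
    exact mul_le_mul_of_nonneg_left haux (by positivity)
  have tele : ∑ n ∈ Finset.Ioc X M, (g (n-1) - g n) ≤ g X := by
    rw [← Finset.Ico_add_one_add_one_eq_Ioc, Finset.sum_Ico_eq_sum_range]
    have e : ∀ j, g (X + 1 + j - 1) - g (X + 1 + j) = g (X + j) - g (X + (j+1)) := by
      intro j; congr 2 <;> omega
    rw [Finset.sum_congr rfl (fun j _ => e j)]
    rw [Finset.sum_range_sub' (fun j => g (X + j)) (M + 1 - (X+1))]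
    have : (0:ℝ) ≤ g (X + (M + 1 - (X+1))) := Real.rpow_nonneg (by positivity) _
    simp only [Nat.add_zero]
    linarith
  have hgX : g X ≤ (2:ℝ)^p * T^(-p) := by
    have hhalf : T/2 ≤ (X:ℝ) := by
      have h1 : T - 1 < (X:ℝ) := Nat.sub_one_lt_floor T
      linarith
    have h2 : (X:ℝ)^(-p) ≤ (T/2)^(-p) :=
      Real.rpow_le_rpow_of_nonpos (by linarith) hhalf (by linarith)
    have h3 : (T/2)^(-p) = 2^p * T^(-p) := by
      rw [Real.div_rpow hT0.le (by norm_num)]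
      rw [Real.rpow_neg (by norm_num : (0:ℝ) ≤ 2)]
      field_simp
    rw [← h3]; exact h2
  calc ∑ n ∈ Finset.Ioc X M, ((n:ℝ)^a)⁻¹
      ≤ ∑ n ∈ Finset.Ioc X M, (1/p) * (g (n-1) - g n) := Finset.sum_le_sum key
    _ = (1/p) * ∑ n ∈ Finset.Ioc X M, (g (n-1) - g n) := by rw [← Finset.mul_sum]
    _ ≤ (1/p) * g X := by
        apply mul_le_mul_of_nonneg_left tele (by positivity)
    _ ≤ (1/p) * ((2:ℝ)^p * T^(-p)) := mul_le_mul_of_nonneg_left hgX (by positivity)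
    _ = (2:ℝ)^p / p * T^(1-a) := by
        have : -p = 1 - a := by rw [hpdef]; ring
        rw [this]; ring

lemma rpow_comparable {x y : ℝ} (hx : 0 < x) (hy : 0 < y)
    (hxy : x ≤ 2*y) (hyx : y ≤ 2*x) (σ : ℝ) : x ^ σ ≤ 2 ^ |σ| * y ^ σ := by
  rcases le_or_gt 0 σ with h | h
  · have habs : |σ| = σ := abs_of_nonneg h
    calc x ^ σ ≤ (2*y) ^ σ := Real.rpow_le_rpow hx.le hxy h
      _ = 2 ^ σ * y ^ σ := Real.mul_rpow (by norm_num) hy.le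
      _ = 2 ^ |σ| * y ^ σ := by rw [habs]
  · have habs : |σ| = -σ := abs_of_neg h
    have h1 : (2*x) ^ σ ≤ y ^ σ := Real.rpow_le_rpow_of_nonpos hy hyx h.le
    have h2 : (2*x) ^ σ = 2^σ * x^σ := Real.mul_rpow (by norm_num) hx.le
    have h3 : x ^ σ = 2^(-σ) * ((2*x)^σ) := by
      rw [h2, ← mul_assoc, ← Real.rpow_add (by norm_num : (0:ℝ) < 2)]
      simp
    rw [habs, h3]
    exact mul_le_mul_of_nonneg_left h1 (Real.rpow_nonneg (by norm_num) _)

lemma inv_le_mul_inv {P Q K : ℝ} (hP : 0 < P) (hQ : 0 < Q) (hK : 0 < K) (h : Q ≤ K * P) :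
    P⁻¹ ≤ K * Q⁻¹ := by
  have h0 : 0 < K⁻¹ * Q := by positivity
  have h1 : K⁻¹ * Q ≤ P := by
    rw [inv_mul_le_iff₀ hK]
    exact h
  calc P⁻¹ ≤ (K⁻¹ * Q)⁻¹ := inv_anti₀ h0 h1
    _ = K * Q⁻¹ := by rw [mul_inv, inv_inv]

lemma sum_triple_prod (s₁ s₂ s₃ : Finset ℕ) (f g h : ℕ → ℝ) :
    ∑ q ∈ s₁ ×ˢ s₂ ×ˢ s₃, f q.1 * g q.2.1 * h q.2.2
      = (∑ i ∈ s₁, f i) * (∑ i ∈ s₂, g i) * (∑ i ∈ s₃, h i) := by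
  rw [Finset.sum_product]
  simp only [Finset.sum_product]
  rw [Finset.sum_mul, Finset.sum_mul]
  refine Finset.sum_congr rfl fun x _ => ?_
  rw [Finset.mul_sum (s := s₂), Finset.sum_mul]
  refine Finset.sum_congr rfl fun y _ => ?_
  rw [Finset.mul_sum]

lemma pointwise1 (σ₁ σ₂ σ₃ T : ℝ) (h3 : 0 < σ₃) (hT : 2 ≤ T)
    (m₁ n₁ m₂ n₂ : ℕ) (hm₁ : T < (m₁:ℝ)) (hn₁ : 1 ≤ n₁) (hn₁T : (n₁:ℝ) ≤ T)
    (hm₂ : 1 ≤ m₂) (hn₂ : 1 ≤ n₂) (hn₂T : (n₂:ℝ) ≤ T)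
    (hdiag : m₁ + n₁ = m₂ + n₂) (hD : 2*n₂ ≤ m₁ + n₁) :
    ((m₁:ℝ)^σ₁ * (m₂:ℝ)^σ₁ * (n₁:ℝ)^σ₂ * (n₂:ℝ)^σ₂ * ((m₁+n₁:ℕ):ℝ)^(2*σ₃))⁻¹
      ≤ (2^|σ₁| * ((m₁:ℝ)^(2*σ₁+2*σ₃))⁻¹) * (((n₁:ℝ)^σ₂)⁻¹) * (((n₂:ℝ)^σ₂)⁻¹) := by
  have ha0 : (0:ℝ) < (m₁:ℝ) := lt_trans (by linarith) hm₁
  have hb1 : (1:ℝ) ≤ (n₁:ℝ) := by exact_mod_cast hn₁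
  have hc1 : (1:ℝ) ≤ (m₂:ℝ) := by exact_mod_cast hm₂
  have hd1 : (1:ℝ) ≤ (n₂:ℝ) := by exact_mod_cast hn₂
  have hc0 : (0:ℝ) < (m₂:ℝ) := by linarith
  have hba : (n₁:ℝ) ≤ (m₁:ℝ) := le_trans hn₁T hm₁.le
  have hdiagR : (m₁:ℝ) + (n₁:ℝ) = (m₂:ℝ) + (n₂:ℝ) := by exact_mod_cast hdiag
  have hDR : 2*(n₂:ℝ) ≤ (m₁:ℝ) + (n₁:ℝ) := by exact_mod_cast hD
  have hc2a : (m₂:ℝ) ≤ 2*(m₁:ℝ) := by linarith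
  have ha2c : (m₁:ℝ) ≤ 2*(m₂:ℝ) := by linarith
  have hcast : ((m₁+n₁:ℕ):ℝ) = (m₁:ℝ)+(n₁:ℝ) := by push_cast; ring
  rw [hcast]
  have hKpos : (0:ℝ) < 2^|σ₁| := Real.rpow_pos_of_pos two_pos _
  have core : (m₁:ℝ)^(2*σ₁+2*σ₃)
      ≤ 2^|σ₁| * ((m₁:ℝ)^σ₁ * (m₂:ℝ)^σ₁ * ((m₁:ℝ)+(n₁:ℝ))^(2*σ₃)) := by
    have e : (m₁:ℝ)^(2*σ₁+2*σ₃) = (m₁:ℝ)^σ₁ * (m₁:ℝ)^σ₁ * (m₁:ℝ)^(2*σ₃) := by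
      rw [show 2*σ₁+2*σ₃ = σ₁ + (σ₁ + 2*σ₃) by ring, Real.rpow_add ha0, Real.rpow_add ha0]
      ring
    have hcomp : (m₁:ℝ)^σ₁ ≤ 2^|σ₁| * (m₂:ℝ)^σ₁ := rpow_comparable ha0 hc0 ha2c hc2a σ₁
    have hmono : (m₁:ℝ)^(2*σ₃) ≤ ((m₁:ℝ)+(n₁:ℝ))^(2*σ₃) :=
      Real.rpow_le_rpow ha0.le (by linarith) (by linarith)
    calc (m₁:ℝ)^(2*σ₁+2*σ₃) = (m₁:ℝ)^σ₁ * (m₁:ℝ)^σ₁ * (m₁:ℝ)^(2*σ₃) := e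
      _ ≤ ((m₁:ℝ)^σ₁ * (2^|σ₁| * (m₂:ℝ)^σ₁)) * (((m₁:ℝ)+(n₁:ℝ))^(2*σ₃)) := by
          apply mul_le_mul (mul_le_mul_of_nonneg_left hcomp (Real.rpow_nonneg ha0.le _)) hmono
            (Real.rpow_nonneg ha0.le _)
          positivity
      _ = 2^|σ₁| * ((m₁:ℝ)^σ₁ * (m₂:ℝ)^σ₁ * ((m₁:ℝ)+(n₁:ℝ))^(2*σ₃)) := by ring
  have hP : (0:ℝ) < (m₁:ℝ)^σ₁ * (m₂:ℝ)^σ₁ * (n₁:ℝ)^σ₂ * (n₂:ℝ)^σ₂ * ((m₁:ℝ)+(n₁:ℝ))^(2*σ₃) := by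
    positivity
  have hQ : (0:ℝ) < (m₁:ℝ)^(2*σ₁+2*σ₃) * (n₁:ℝ)^σ₂ * (n₂:ℝ)^σ₂ := by positivity
  have hmain : (m₁:ℝ)^(2*σ₁+2*σ₃) * (n₁:ℝ)^σ₂ * (n₂:ℝ)^σ₂
      ≤ 2^|σ₁| * ((m₁:ℝ)^σ₁ * (m₂:ℝ)^σ₁ * (n₁:ℝ)^σ₂ * (n₂:ℝ)^σ₂ * ((m₁:ℝ)+(n₁:ℝ))^(2*σ₃)) := by
    calc (m₁:ℝ)^(2*σ₁+2*σ₃) * (n₁:ℝ)^σ₂ * (n₂:ℝ)^σ₂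
        ≤ (2^|σ₁| * ((m₁:ℝ)^σ₁ * (m₂:ℝ)^σ₁ * ((m₁:ℝ)+(n₁:ℝ))^(2*σ₃))) * (n₁:ℝ)^σ₂ * (n₂:ℝ)^σ₂ := by
          apply mul_le_mul_of_nonneg_right (mul_le_mul_of_nonneg_right core
            (Real.rpow_nonneg (by linarith) _)) (Real.rpow_nonneg (by linarith) _)
      _ = 2^|σ₁| * ((m₁:ℝ)^σ₁ * (m₂:ℝ)^σ₁ * (n₁:ℝ)^σ₂ * (n₂:ℝ)^σ₂ * ((m₁:ℝ)+(n₁:ℝ))^(2*σ₃)) := by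
          ring
  calc ((m₁:ℝ)^σ₁ * (m₂:ℝ)^σ₁ * (n₁:ℝ)^σ₂ * (n₂:ℝ)^σ₂ * ((m₁:ℝ)+(n₁:ℝ))^(2*σ₃))⁻¹
      ≤ 2^|σ₁| * ((m₁:ℝ)^(2*σ₁+2*σ₃) * (n₁:ℝ)^σ₂ * (n₂:ℝ)^σ₂)⁻¹ :=
        inv_le_mul_inv hP hQ hKpos hmain
    _ = (2^|σ₁| * ((m₁:ℝ)^(2*σ₁+2*σ₃))⁻¹) * (((n₁:ℝ)^σ₂)⁻¹) * (((n₂:ℝ)^σ₂)⁻¹) := by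
        rw [mul_inv, mul_inv]; ring

lemma pointwise2 (σ₁ σ₂ σ₃ T : ℝ) (h3 : 0 < σ₃) (hT : 2 ≤ T)
    (m₁ n₁ m₂ n₂ : ℕ) (hm₁ : T < (m₁:ℝ)) (hn₁ : 1 ≤ n₁) (hn₁T : (n₁:ℝ) ≤ T)
    (hm₂ : 1 ≤ m₂) (hn₂ : 1 ≤ n₂) (hn₂T : (n₂:ℝ) ≤ T)
    (hdiag : m₁ + n₁ = m₂ + n₂) (hD : m₁ + n₁ < 2*n₂) :
    ((m₁:ℝ)^σ₁ * (m₂:ℝ)^σ₁ * (n₁:ℝ)^σ₂ * (n₂:ℝ)^σ₂ * ((m₁+n₁:ℕ):ℝ)^(2*σ₃))⁻¹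
      ≤ (2^|σ₂| * ((m₁:ℝ)^(σ₁+σ₂+2*σ₃))⁻¹) * (((n₁:ℝ)^σ₂)⁻¹) * (((m₂:ℝ)^σ₁)⁻¹) := by
  have ha0 : (0:ℝ) < (m₁:ℝ) := lt_trans (by linarith) hm₁
  have hb1 : (1:ℝ) ≤ (n₁:ℝ) := by exact_mod_cast hn₁
  have hc1 : (1:ℝ) ≤ (m₂:ℝ) := by exact_mod_cast hm₂
  have hd1 : (1:ℝ) ≤ (n₂:ℝ) := by exact_mod_cast hn₂
  have hd0 : (0:ℝ) < (n₂:ℝ) := by linarith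
  have hba : (n₁:ℝ) ≤ (m₁:ℝ) := le_trans hn₁T hm₁.le
  have hdiagR : (m₁:ℝ) + (n₁:ℝ) = (m₂:ℝ) + (n₂:ℝ) := by exact_mod_cast hdiag
  have hDR : (m₁:ℝ) + (n₁:ℝ) ≤ 2*(n₂:ℝ) := by
    have : (m₁:ℝ) + (n₁:ℝ) < 2*(n₂:ℝ) := by exact_mod_cast hD
    linarith
  have ha2d : (m₁:ℝ) ≤ 2*(n₂:ℝ) := by linarith
  have hd2a : (n₂:ℝ) ≤ 2*(m₁:ℝ) := by linarith [le_trans hn₂T hm₁.le]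
  have hcast : ((m₁+n₁:ℕ):ℝ) = (m₁:ℝ)+(n₁:ℝ) := by push_cast; ring
  rw [hcast]
  have hKpos : (0:ℝ) < 2^|σ₂| := Real.rpow_pos_of_pos two_pos _
  have core : (m₁:ℝ)^(σ₁+σ₂+2*σ₃)
      ≤ 2^|σ₂| * ((m₁:ℝ)^σ₁ * (n₂:ℝ)^σ₂ * ((m₁:ℝ)+(n₁:ℝ))^(2*σ₃)) := by
    have e : (m₁:ℝ)^(σ₁+σ₂+2*σ₃) = (m₁:ℝ)^σ₁ * (m₁:ℝ)^σ₂ * (m₁:ℝ)^(2*σ₃) := by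
      rw [show σ₁+σ₂+2*σ₃ = σ₁ + (σ₂ + 2*σ₃) by ring, Real.rpow_add ha0, Real.rpow_add ha0]
      ring
    have hcomp : (m₁:ℝ)^σ₂ ≤ 2^|σ₂| * (n₂:ℝ)^σ₂ := rpow_comparable ha0 hd0 ha2d hd2a σ₂
    have hmono : (m₁:ℝ)^(2*σ₃) ≤ ((m₁:ℝ)+(n₁:ℝ))^(2*σ₃) :=
      Real.rpow_le_rpow ha0.le (by linarith) (by linarith)
    calc (m₁:ℝ)^(σ₁+σ₂+2*σ₃) = (m₁:ℝ)^σ₁ * (m₁:ℝ)^σ₂ * (m₁:ℝ)^(2*σ₃) := e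
      _ ≤ ((m₁:ℝ)^σ₁ * (2^|σ₂| * (n₂:ℝ)^σ₂)) * (((m₁:ℝ)+(n₁:ℝ))^(2*σ₃)) := by
          apply mul_le_mul (mul_le_mul_of_nonneg_left hcomp (Real.rpow_nonneg ha0.le _)) hmono
            (Real.rpow_nonneg ha0.le _)
          positivity
      _ = 2^|σ₂| * ((m₁:ℝ)^σ₁ * (n₂:ℝ)^σ₂ * ((m₁:ℝ)+(n₁:ℝ))^(2*σ₃)) := by ring
  have hP : (0:ℝ) < (m₁:ℝ)^σ₁ * (m₂:ℝ)^σ₁ * (n₁:ℝ)^σ₂ * (n₂:ℝ)^σ₂ * ((m₁:ℝ)+(n₁:ℝ))^(2*σ₃) := by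
    positivity
  have hQ : (0:ℝ) < (m₁:ℝ)^(σ₁+σ₂+2*σ₃) * (n₁:ℝ)^σ₂ * (m₂:ℝ)^σ₁ := by positivity
  have hmain : (m₁:ℝ)^(σ₁+σ₂+2*σ₃) * (n₁:ℝ)^σ₂ * (m₂:ℝ)^σ₁
      ≤ 2^|σ₂| * ((m₁:ℝ)^σ₁ * (m₂:ℝ)^σ₁ * (n₁:ℝ)^σ₂ * (n₂:ℝ)^σ₂ * ((m₁:ℝ)+(n₁:ℝ))^(2*σ₃)) := by
    calc (m₁:ℝ)^(σ₁+σ₂+2*σ₃) * (n₁:ℝ)^σ₂ * (m₂:ℝ)^σ₁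
        ≤ (2^|σ₂| * ((m₁:ℝ)^σ₁ * (n₂:ℝ)^σ₂ * ((m₁:ℝ)+(n₁:ℝ))^(2*σ₃))) * (n₁:ℝ)^σ₂ * (m₂:ℝ)^σ₁ := by
          apply mul_le_mul_of_nonneg_right (mul_le_mul_of_nonneg_right core
            (Real.rpow_nonneg (by linarith) _)) (Real.rpow_nonneg (by linarith) _)
      _ = 2^|σ₂| * ((m₁:ℝ)^σ₁ * (m₂:ℝ)^σ₁ * (n₁:ℝ)^σ₂ * (n₂:ℝ)^σ₂ * ((m₁:ℝ)+(n₁:ℝ))^(2*σ₃)) := by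
          ring
  calc ((m₁:ℝ)^σ₁ * (m₂:ℝ)^σ₁ * (n₁:ℝ)^σ₂ * (n₂:ℝ)^σ₂ * ((m₁:ℝ)+(n₁:ℝ))^(2*σ₃))⁻¹
      ≤ 2^|σ₂| * ((m₁:ℝ)^(σ₁+σ₂+2*σ₃) * (n₁:ℝ)^σ₂ * (m₂:ℝ)^σ₁)⁻¹ :=
        inv_le_mul_inv hP hQ hKpos hmain
    _ = (2^|σ₂| * ((m₁:ℝ)^(σ₁+σ₂+2*σ₃))⁻¹) * (((n₁:ℝ)^σ₂)⁻¹) * (((m₂:ℝ)^σ₁)⁻¹) := by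
        rw [mul_inv, mul_inv]; ring



set_option maxHeartbeats 2000000 in
open scoped Classical in
/-- Diagonal tail estimate: for `σ₁, σ₂ < 1`, `σ₃ > 0`,
`3/2 < σ₁+σ₂+σ₃ ≤ 2`, the sum over `m₁ > T`, `n₁, n₂ ≤ T`, `m₂ ≥ 1` with
`m₁+n₁ = m₂+n₂` is `≪ T^{3-2σ₁-2σ₂-2σ₃}`. -/
theorem diagonal_tail_sum_bound (σ₁ σ₂ σ₃ : ℝ) (h1 : σ₁ < 1) (h2 : σ₂ < 1)
    (h3 : 0 < σ₃) (hl : 3 / 2 < σ₁ + σ₂ + σ₃) (hu : σ₁ + σ₂ + σ₃ ≤ 2) :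
    ∃ C > 0, ∀ T : ℝ, 2 ≤ T →
      Summable (fun p : ℕ × ℕ × ℕ × ℕ =>
        if T < (p.1 : ℝ) ∧ 1 ≤ p.2.1 ∧ (p.2.1 : ℝ) ≤ T ∧ 1 ≤ p.2.2.1 ∧
            1 ≤ p.2.2.2 ∧ (p.2.2.2 : ℝ) ≤ T ∧ p.1 + p.2.1 = p.2.2.1 + p.2.2.2 then
          ((p.1 : ℝ) ^ σ₁ * (p.2.2.1 : ℝ) ^ σ₁ * (p.2.1 : ℝ) ^ σ₂ *
            (p.2.2.2 : ℝ) ^ σ₂ * ((p.1 + p.2.1 : ℕ) : ℝ) ^ (2 * σ₃))⁻¹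
        else 0) ∧
      (∑' p : ℕ × ℕ × ℕ × ℕ,
        if T < (p.1 : ℝ) ∧ 1 ≤ p.2.1 ∧ (p.2.1 : ℝ) ≤ T ∧ 1 ≤ p.2.2.1 ∧
            1 ≤ p.2.2.2 ∧ (p.2.2.2 : ℝ) ≤ T ∧ p.1 + p.2.1 = p.2.2.1 + p.2.2.2 then
          ((p.1 : ℝ) ^ σ₁ * (p.2.2.1 : ℝ) ^ σ₁ * (p.2.1 : ℝ) ^ σ₂ *
            (p.2.2.2 : ℝ) ^ σ₂ * ((p.1 + p.2.1 : ℕ) : ℝ) ^ (2 * σ₃))⁻¹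
        else 0) ≤ C * T ^ (3 - 2 * σ₁ - 2 * σ₂ - 2 * σ₃) := by
  obtain ⟨C₁, hC₁0, hC₁b⟩ := tail_sum_le (2*σ₁+2*σ₃) (by linarith)
  obtain ⟨C₂, hC₂0, hC₂b⟩ := head_sum_le σ₂ h2
  obtain ⟨C₃, hC₃0, hC₃b⟩ := tail_sum_le (σ₁+σ₂+2*σ₃) (by linarith)
  obtain ⟨C₄, hC₄0, hC₄b⟩ := head_sum_le σ₁ h1
  have hK₁0 : (0:ℝ) < 2^|σ₁| := Real.rpow_pos_of_pos two_pos _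
  have hK₂0 : (0:ℝ) < 2^|σ₂| := Real.rpow_pos_of_pos two_pos _
  refine ⟨2^|σ₁| *C₁*C₂*C₂ + 2^|σ₂| *C₃*C₂*C₄, by positivity, fun T hT => ?_⟩
  have hT0 : (0:ℝ) < T := by linarith
  have hT1 : (1:ℝ) ≤ T := by linarith
  set F : ℕ × ℕ × ℕ × ℕ → ℝ := fun p =>
    if T < (p.1 : ℝ) ∧ 1 ≤ p.2.1 ∧ (p.2.1 : ℝ) ≤ T ∧ 1 ≤ p.2.2.1 ∧
        1 ≤ p.2.2.2 ∧ (p.2.2.2 : ℝ) ≤ T ∧ p.1 + p.2.1 = p.2.2.1 + p.2.2.2 then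
      ((p.1 : ℝ) ^ σ₁ * (p.2.2.1 : ℝ) ^ σ₁ * (p.2.1 : ℝ) ^ σ₂ *
        (p.2.2.2 : ℝ) ^ σ₂ * ((p.1 + p.2.1 : ℕ) : ℝ) ^ (2 * σ₃))⁻¹
    else 0 with hF
  have hF0 : 0 ≤ F := by
    intro p
    simp only [hF]
    split
    · positivity
    · exact le_rfl
  have key : ∀ u : Finset (ℕ × ℕ × ℕ × ℕ),
      ∑ p ∈ u, F p ≤ (2^|σ₁| *C₁*C₂*C₂ + 2^|σ₂| *C₃*C₂*C₄) * T ^ (3 - 2*σ₁ - 2*σ₂ - 2*σ₃) := by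
    intro u
    set X := ⌊T⌋₊ with hX
    set M := u.sup (fun p => p.1) with hM
    set term : ℕ × ℕ × ℕ × ℕ → ℝ := fun p =>
      ((p.1 : ℝ) ^ σ₁ * (p.2.2.1 : ℝ) ^ σ₁ * (p.2.1 : ℝ) ^ σ₂ *
        (p.2.2.2 : ℝ) ^ σ₂ * ((p.1 + p.2.1 : ℕ) : ℝ) ^ (2 * σ₃))⁻¹ with hterm
    set Cond : ℕ × ℕ × ℕ × ℕ → Prop := fun p =>
      T < (p.1 : ℝ) ∧ 1 ≤ p.2.1 ∧ (p.2.1 : ℝ) ≤ T ∧ 1 ≤ p.2.2.1 ∧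
        1 ≤ p.2.2.2 ∧ (p.2.2.2 : ℝ) ≤ T ∧ p.1 + p.2.1 = p.2.2.1 + p.2.2.2 with hCond
    have e1 : ∑ p ∈ u, F p = ∑ p ∈ u.filter Cond, term p := by
      rw [Finset.sum_filter]
    rw [e1]
    set D : ℕ × ℕ × ℕ × ℕ → Prop := fun p => 2*p.2.2.2 ≤ p.1 + p.2.1 with hD
    rw [← Finset.sum_filter_add_sum_filter_not (u.filter Cond) D]
    -- membership unpacking helper
    have mem1 : ∀ p ∈ (u.filter Cond).filter D, p ∈ u ∧ Cond p ∧ D p := by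
      intro p hp
      rw [Finset.mem_filter, Finset.mem_filter] at hp
      exact ⟨hp.1.1, hp.1.2, hp.2⟩
    have mem2 : ∀ p ∈ (u.filter Cond).filter (fun p => ¬ D p), p ∈ u ∧ Cond p ∧ ¬ D p := by
      intro p hp
      rw [Finset.mem_filter, Finset.mem_filter] at hp
      exact ⟨hp.1.1, hp.1.2, hp.2⟩
    have floor1 : ∀ p : ℕ × ℕ × ℕ × ℕ, Cond p → X < p.1 ∧ p.2.1 ∈ Finset.Icc 1 X ∧
        p.2.2.2 ∈ Finset.Icc 1 X := by
      intro p hc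
      obtain ⟨c1, c2, c3, c4, c5, c6, c7⟩ := hc
      refine ⟨(Nat.floor_lt hT0.le).mpr c1, ?_, ?_⟩ <;> rw [Finset.mem_Icc]
      · exact ⟨c2, Nat.le_floor c3⟩
      · exact ⟨c5, Nat.le_floor c6⟩
    -- Part 1
    have part1 : ∑ p ∈ (u.filter Cond).filter D, term p
        ≤ 2^|σ₁| *C₁*C₂*C₂ * T ^ (3 - 2*σ₁ - 2*σ₂ - 2*σ₃) := by
      have step1 : ∀ p ∈ (u.filter Cond).filter D, term p ≤
          (fun q : ℕ × ℕ × ℕ => (2^|σ₁| * ((q.1:ℝ)^(2*σ₁+2*σ₃))⁻¹) * (((q.2.1:ℝ)^σ₂)⁻¹) *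
            (((q.2.2:ℝ)^σ₂)⁻¹)) ((p.1, p.2.1, p.2.2.2)) := by
        intro p hp
        obtain ⟨hu', hc, hd⟩ := mem1 p hp
        obtain ⟨c1, c2, c3, c4, c5, c6, c7⟩ := hc
        exact pointwise1 σ₁ σ₂ σ₃ T h3 hT p.1 p.2.1 p.2.2.1 p.2.2.2 c1 c2 c3 c4 c5 c6 c7 hd
      have inj : ∀ x ∈ (u.filter Cond).filter D, ∀ y ∈ (u.filter Cond).filter D,
          (fun p : ℕ × ℕ × ℕ × ℕ => (p.1, p.2.1, p.2.2.2)) x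
            = (fun p : ℕ × ℕ × ℕ × ℕ => (p.1, p.2.1, p.2.2.2)) y → x = y := by
        intro x hx y hy hxy
        obtain ⟨-, hcx, -⟩ := mem1 x hx
        obtain ⟨-, hcy, -⟩ := mem1 y hy
        obtain ⟨a, b, c, d⟩ := x
        obtain ⟨a', b', c', d'⟩ := y
        simp only [Prod.mk.injEq] at hxy ⊢
        have d1 : a + b = c + d := hcx.2.2.2.2.2.2
        have d2 : a' + b' = c' + d' := hcy.2.2.2.2.2.2
        omega
      calc ∑ p ∈ (u.filter Cond).filter D, term p
          ≤ ∑ p ∈ (u.filter Cond).filter D,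
              (fun q : ℕ × ℕ × ℕ => (2^|σ₁| * ((q.1:ℝ)^(2*σ₁+2*σ₃))⁻¹) * (((q.2.1:ℝ)^σ₂)⁻¹) *
                (((q.2.2:ℝ)^σ₂)⁻¹)) ((p.1, p.2.1, p.2.2.2)) := Finset.sum_le_sum step1
        _ = ∑ q ∈ ((u.filter Cond).filter D).image (fun p : ℕ × ℕ × ℕ × ℕ => (p.1, p.2.1, p.2.2.2)),
              (2^|σ₁| * ((q.1:ℝ)^(2*σ₁+2*σ₃))⁻¹) * (((q.2.1:ℝ)^σ₂)⁻¹) * (((q.2.2:ℝ)^σ₂)⁻¹) :=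
            (Finset.sum_image (f := fun q : ℕ × ℕ × ℕ =>
              (2^|σ₁| * ((q.1:ℝ)^(2*σ₁+2*σ₃))⁻¹) * (((q.2.1:ℝ)^σ₂)⁻¹) * (((q.2.2:ℝ)^σ₂)⁻¹)) inj).symm
        _ ≤ ∑ q ∈ Finset.Ioc X M ×ˢ Finset.Icc 1 X ×ˢ Finset.Icc 1 X,
              (2^|σ₁| * ((q.1:ℝ)^(2*σ₁+2*σ₃))⁻¹) * (((q.2.1:ℝ)^σ₂)⁻¹) * (((q.2.2:ℝ)^σ₂)⁻¹) := by
            apply Finset.sum_le_sum_of_subset_of_nonneg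
            · intro q hq
              rw [Finset.mem_image] at hq
              obtain ⟨p, hp, rfl⟩ := hq
              obtain ⟨hu', hc, -⟩ := mem1 p hp
              obtain ⟨hf1, hf2, hf3⟩ := floor1 p hc
              rw [Finset.mem_product, Finset.mem_product]
              refine ⟨?_, hf2, hf3⟩
              rw [Finset.mem_Ioc]
              exact ⟨hf1, Finset.le_sup (f := fun p : ℕ × ℕ × ℕ × ℕ => p.1) hu'⟩
            · intro q _ _
              positivity
        _ = (∑ i ∈ Finset.Ioc X M, 2^|σ₁| * ((i:ℝ)^(2*σ₁+2*σ₃))⁻¹)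
              * (∑ i ∈ Finset.Icc 1 X, ((i:ℝ)^σ₂)⁻¹) * (∑ i ∈ Finset.Icc 1 X, ((i:ℝ)^σ₂)⁻¹) :=
            sum_triple_prod _ _ _ (fun i => 2^|σ₁| * ((i:ℝ)^(2*σ₁+2*σ₃))⁻¹)
              (fun i => ((i:ℝ)^σ₂)⁻¹) (fun i => ((i:ℝ)^σ₂)⁻¹)
        _ = 2^|σ₁| * (∑ i ∈ Finset.Ioc X M, ((i:ℝ)^(2*σ₁+2*σ₃))⁻¹)
              * (∑ i ∈ Finset.Icc 1 X, ((i:ℝ)^σ₂)⁻¹) * (∑ i ∈ Finset.Icc 1 X, ((i:ℝ)^σ₂)⁻¹) := by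
            rw [← Finset.mul_sum]
        _ ≤ 2^|σ₁| * (C₁ * T^(1-(2*σ₁+2*σ₃))) * (C₂ * T^(1-σ₂)) * (C₂ * T^(1-σ₂)) := by
            have s1 : (0:ℝ) ≤ ∑ i ∈ Finset.Ioc X M, ((i:ℝ)^(2*σ₁+2*σ₃))⁻¹ :=
              Finset.sum_nonneg fun i _ => by positivity
            have s2 : (0:ℝ) ≤ ∑ i ∈ Finset.Icc 1 X, ((i:ℝ)^σ₂)⁻¹ :=
              Finset.sum_nonneg fun i _ => by positivity
            have b1 := hC₁b T hT M
            have b2 := hC₂b T hT1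
            gcongr <;> positivity
        _ = 2^|σ₁| *C₁*C₂*C₂ * T ^ (3 - 2*σ₁ - 2*σ₂ - 2*σ₃) := by
            rw [show (2:ℝ)^|σ₁| * (C₁ * T^(1-(2*σ₁+2*σ₃))) * (C₂ * T^(1-σ₂)) * (C₂ * T^(1-σ₂))
              = 2^|σ₁| *C₁*C₂*C₂ * (T^(1-(2*σ₁+2*σ₃)) * T^(1-σ₂) * T^(1-σ₂)) by ring]
            congr 1
            rw [← Real.rpow_add hT0, ← Real.rpow_add hT0]
            congr 1
            ring
    -- Part 2
    have part2 : ∑ p ∈ (u.filter Cond).filter (fun p => ¬ D p), term p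
        ≤ 2^|σ₂| *C₃*C₂*C₄ * T ^ (3 - 2*σ₁ - 2*σ₂ - 2*σ₃) := by
      have step1 : ∀ p ∈ (u.filter Cond).filter (fun p => ¬ D p), term p ≤
          (fun q : ℕ × ℕ × ℕ => (2^|σ₂| * ((q.1:ℝ)^(σ₁+σ₂+2*σ₃))⁻¹) * (((q.2.1:ℝ)^σ₂)⁻¹) *
            (((q.2.2:ℝ)^σ₁)⁻¹)) ((p.1, p.2.1, p.2.2.1)) := by
        intro p hp
        obtain ⟨hu', hc, hd⟩ := mem2 p hp
        obtain ⟨c1, c2, c3, c4, c5, c6, c7⟩ := hc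
        have hd' : p.1 + p.2.1 < 2*p.2.2.2 := by
          simp only [hD] at hd
          omega
        exact pointwise2 σ₁ σ₂ σ₃ T h3 hT p.1 p.2.1 p.2.2.1 p.2.2.2 c1 c2 c3 c4 c5 c6 c7 hd'
      have inj : ∀ x ∈ (u.filter Cond).filter (fun p => ¬ D p),
          ∀ y ∈ (u.filter Cond).filter (fun p => ¬ D p),
          (fun p : ℕ × ℕ × ℕ × ℕ => (p.1, p.2.1, p.2.2.1)) x
            = (fun p : ℕ × ℕ × ℕ × ℕ => (p.1, p.2.1, p.2.2.1)) y → x = y := by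
        intro x hx y hy hxy
        obtain ⟨-, hcx, -⟩ := mem2 x hx
        obtain ⟨-, hcy, -⟩ := mem2 y hy
        obtain ⟨a, b, c, d⟩ := x
        obtain ⟨a', b', c', d'⟩ := y
        simp only [Prod.mk.injEq] at hxy ⊢
        have d1 : a + b = c + d := hcx.2.2.2.2.2.2
        have d2 : a' + b' = c' + d' := hcy.2.2.2.2.2.2
        omega
      have memb2 : ∀ p : ℕ × ℕ × ℕ × ℕ, Cond p → ¬ D p → p.2.2.1 ∈ Finset.Icc 1 X := by
        intro p hc hd
        obtain ⟨c1, c2, c3, c4, c5, c6, c7⟩ := hc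
        rw [Finset.mem_Icc]
        refine ⟨c4, ?_⟩
        simp only [hD] at hd
        have h6 : p.2.2.2 ≤ X := Nat.le_floor c6
        omega
      calc ∑ p ∈ (u.filter Cond).filter (fun p => ¬ D p), term p
          ≤ ∑ p ∈ (u.filter Cond).filter (fun p => ¬ D p),
              (fun q : ℕ × ℕ × ℕ => (2^|σ₂| * ((q.1:ℝ)^(σ₁+σ₂+2*σ₃))⁻¹) * (((q.2.1:ℝ)^σ₂)⁻¹) *
                (((q.2.2:ℝ)^σ₁)⁻¹)) ((p.1, p.2.1, p.2.2.1)) := Finset.sum_le_sum step1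
        _ = ∑ q ∈ ((u.filter Cond).filter (fun p => ¬ D p)).image
              (fun p : ℕ × ℕ × ℕ × ℕ => (p.1, p.2.1, p.2.2.1)),
              (2^|σ₂| * ((q.1:ℝ)^(σ₁+σ₂+2*σ₃))⁻¹) * (((q.2.1:ℝ)^σ₂)⁻¹) * (((q.2.2:ℝ)^σ₁)⁻¹) :=
            (Finset.sum_image (f := fun q : ℕ × ℕ × ℕ =>
              (2^|σ₂| * ((q.1:ℝ)^(σ₁+σ₂+2*σ₃))⁻¹) * (((q.2.1:ℝ)^σ₂)⁻¹) * (((q.2.2:ℝ)^σ₁)⁻¹)) inj).symm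
        _ ≤ ∑ q ∈ Finset.Ioc X M ×ˢ Finset.Icc 1 X ×ˢ Finset.Icc 1 X,
              (2^|σ₂| * ((q.1:ℝ)^(σ₁+σ₂+2*σ₃))⁻¹) * (((q.2.1:ℝ)^σ₂)⁻¹) * (((q.2.2:ℝ)^σ₁)⁻¹) := by
            apply Finset.sum_le_sum_of_subset_of_nonneg
            · intro q hq
              rw [Finset.mem_image] at hq
              obtain ⟨p, hp, rfl⟩ := hq
              obtain ⟨hu', hc, hd⟩ := mem2 p hp
              obtain ⟨hf1, hf2, -⟩ := floor1 p hc
              rw [Finset.mem_product, Finset.mem_product]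
              refine ⟨?_, hf2, memb2 p hc hd⟩
              rw [Finset.mem_Ioc]
              exact ⟨hf1, Finset.le_sup (f := fun p : ℕ × ℕ × ℕ × ℕ => p.1) hu'⟩
            · intro q _ _
              positivity
        _ = (∑ i ∈ Finset.Ioc X M, 2^|σ₂| * ((i:ℝ)^(σ₁+σ₂+2*σ₃))⁻¹)
              * (∑ i ∈ Finset.Icc 1 X, ((i:ℝ)^σ₂)⁻¹) * (∑ i ∈ Finset.Icc 1 X, ((i:ℝ)^σ₁)⁻¹) :=
            sum_triple_prod _ _ _ (fun i => 2^|σ₂| * ((i:ℝ)^(σ₁+σ₂+2*σ₃))⁻¹)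
              (fun i => ((i:ℝ)^σ₂)⁻¹) (fun i => ((i:ℝ)^σ₁)⁻¹)
        _ = 2^|σ₂| * (∑ i ∈ Finset.Ioc X M, ((i:ℝ)^(σ₁+σ₂+2*σ₃))⁻¹)
              * (∑ i ∈ Finset.Icc 1 X, ((i:ℝ)^σ₂)⁻¹) * (∑ i ∈ Finset.Icc 1 X, ((i:ℝ)^σ₁)⁻¹) := by
            rw [← Finset.mul_sum]
        _ ≤ 2^|σ₂| * (C₃ * T^(1-(σ₁+σ₂+2*σ₃))) * (C₂ * T^(1-σ₂)) * (C₄ * T^(1-σ₁)) := by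
            have s1 : (0:ℝ) ≤ ∑ i ∈ Finset.Ioc X M, ((i:ℝ)^(σ₁+σ₂+2*σ₃))⁻¹ :=
              Finset.sum_nonneg fun i _ => by positivity
            have s2 : (0:ℝ) ≤ ∑ i ∈ Finset.Icc 1 X, ((i:ℝ)^σ₂)⁻¹ :=
              Finset.sum_nonneg fun i _ => by positivity
            have b1 := hC₃b T hT M
            have b2 := hC₂b T hT1
            have b3 := hC₄b T hT1
            gcongr <;> positivity
        _ = 2^|σ₂| *C₃*C₂*C₄ * T ^ (3 - 2*σ₁ - 2*σ₂ - 2*σ₃) := by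
            rw [show (2:ℝ)^|σ₂| * (C₃ * T^(1-(σ₁+σ₂+2*σ₃))) * (C₂ * T^(1-σ₂)) * (C₄ * T^(1-σ₁))
              = 2^|σ₂| *C₃*C₂*C₄ * (T^(1-(σ₁+σ₂+2*σ₃)) * T^(1-σ₂) * T^(1-σ₁)) by ring]
            congr 1
            rw [← Real.rpow_add hT0, ← Real.rpow_add hT0]
            congr 1
            ring
    calc ∑ p ∈ (u.filter Cond).filter D, term p
          + ∑ p ∈ (u.filter Cond).filter (fun p => ¬ D p), term p
        ≤ 2^|σ₁| *C₁*C₂*C₂ * T ^ (3 - 2*σ₁ - 2*σ₂ - 2*σ₃)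
          + 2^|σ₂| *C₃*C₂*C₄ * T ^ (3 - 2*σ₁ - 2*σ₂ - 2*σ₃) := add_le_add part1 part2
      _ = (2^|σ₁| *C₁*C₂*C₂ + 2^|σ₂| *C₃*C₂*C₄) * T ^ (3 - 2*σ₁ - 2*σ₂ - 2*σ₃) := by ring
  exact ⟨summable_of_sum_le hF0 key, Summable.tsum_le_of_sum_le (summable_of_sum_le hF0 key) key⟩
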